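/- For positive integers s and natural numbers i, j with 0 ≤ i < s and i+1 ≤ j ≤ s, the sum ∑_{j'=i+1}^{j} (-1)^{j-j'} C(s+j'-i-1, s) C(s, j-j') equals 1. -/

import Mathlib

open PowerSeries Finset

lemma coeff_one_sub_X_pow_aux (s m : ℕ) :
    (PowerSeries.coeff m) ((1 - PowerSeries.X) ^ s) = (-1 : ℤ) ^ m * s.choose m := by
  have h : ((1 : ℤ⟦X⟧) - X) ^ s = ∑ k ∈ Finset.range (s + 1),
      (1 : ℤ⟦X⟧) ^ k * (-X) ^ (s - k) * (s.choose k : ℤ⟦X⟧) := by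
    rw [sub_eq_add_neg]; exact add_pow 1 (-X) s
  have h2 : ∀ k, ((1 : ℤ⟦X⟧)) ^ k * (-X) ^ (s - k) * (s.choose k : ℤ⟦X⟧)
      = C (R := ℤ) ((-1) ^ (s - k) * s.choose k) * X ^ (s - k) := by
    intro k
    rw [one_pow, one_mul, neg_pow, map_mul, map_pow, map_neg, map_one, map_natCast]
    ring
  rw [h]
  simp only [h2]
  rw [map_sum]
  simp only [coeff_C_mul_X_pow]
  rw [Finset.sum_eq_single (s - m)]
  · rcases le_or_gt m s with hms | hms
    · rw [if_pos (by omega)]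
      rw [Nat.sub_sub_self hms, Nat.choose_symm hms]
    · rw [if_neg (by omega), Nat.choose_eq_zero_of_lt hms]
      simp
  · intro b hb hbne
    simp only [Finset.mem_range] at hb
    rw [if_neg (by omega)]
  · intro hns
    simp only [Finset.mem_range, not_lt] at hns
    omega

/-- `(1-X)^s * (∑ C(s+n,s) X^n) = ∑ X^n` -/
lemma one_sub_X_pow_mul_mk_aux (s : ℕ) :
    ((1 : ℤ⟦X⟧) - X) ^ s * (PowerSeries.mk fun n => (Nat.choose (s + n) s : ℤ)) =
      PowerSeries.mk 1 := by
  have h1 : (PowerSeries.mk fun n => (Nat.choose (s + n) s : ℤ)) * ((1 - X) ^ (s + 1)) = 1 :=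
    PowerSeries.mk_add_choose_mul_one_sub_pow_eq_one ℤ s
  have h2 : (PowerSeries.mk 1 : ℤ⟦X⟧) * (1 - X) = 1 := PowerSeries.mk_one_mul_one_sub_eq_one ℤ
  calc ((1 : ℤ⟦X⟧) - X) ^ s * (PowerSeries.mk fun n => (Nat.choose (s + n) s : ℤ))
      = ((1 : ℤ⟦X⟧) - X) ^ s * (PowerSeries.mk fun n => (Nat.choose (s + n) s : ℤ))
          * (PowerSeries.mk 1 * (1 - X)) := by rw [h2, mul_one]
    _ = PowerSeries.mk 1 * ((PowerSeries.mk fun n => (Nat.choose (s + n) s : ℤ))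
          * ((1 - X) ^ (s + 1))) := by ring
    _ = PowerSeries.mk 1 := by rw [h1, mul_one]

lemma key_aux (s m : ℕ) :
    ∑ k ∈ Finset.range (m + 1),
        (-1 : ℤ) ^ k * (Nat.choose s k : ℤ) * (Nat.choose (s + (m - k)) s : ℤ) = 1 := by
  have h := congrArg (PowerSeries.coeff m) (one_sub_X_pow_mul_mk_aux s)
  rw [PowerSeries.coeff_mul, Finset.Nat.sum_antidiagonal_eq_sum_range_succ_mk,
    PowerSeries.coeff_mk] at h
  simp only [PowerSeries.coeff_mk, coeff_one_sub_X_pow_aux, Pi.one_apply] at h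
  exact h

theorem stmt16 (s i j : ℕ) (hs : 1 ≤ s) (hij : i < j) (hj : j ≤ s) :
    ∑ j' ∈ Finset.Icc (i + 1) j,
        (-1 : ℤ) ^ (j - j') * (Nat.choose (s + j' - i - 1) s : ℤ) * (Nat.choose s (j - j') : ℤ)
      = 1 := by
  have h : (∑ j' ∈ Finset.Icc (i + 1) j,
        (-1 : ℤ) ^ (j - j') * (Nat.choose (s + j' - i - 1) s : ℤ) * (Nat.choose s (j - j') : ℤ))
      = ∑ k ∈ Finset.range (j - i - 1 + 1),
        (-1 : ℤ) ^ k * (Nat.choose s k : ℤ) * (Nat.choose (s + (j - i - 1 - k)) s : ℤ) := by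
    refine Finset.sum_nbij' (fun j' => j - j') (fun k => j - k) ?_ ?_ ?_ ?_ ?_
    · intro a ha
      simp only [Finset.mem_Icc] at ha
      simp only [Finset.mem_range]
      omega
    · intro a ha
      simp only [Finset.mem_range] at ha
      simp only [Finset.mem_Icc]
      omega
    · intro a ha
      simp only [Finset.mem_Icc] at ha
      omega
    · intro a ha
      simp only [Finset.mem_range] at ha
      omega
    · intro a ha
      simp only [Finset.mem_Icc] at ha
      have h1 : s + a - i - 1 = s + (j - i - 1 - (j - a)) := by omega
      rw [h1]
      ring
  rw [h, key_aux]
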